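/- Let S be an inverse semigroup and let A be a nonempty closed atlas in S. Define a relation ∼ on A by a ∼ b iff there exists c ∈ A with c ≤ a and c ≤ b. Then ∼ is an equivalence relation on A, and every equivalence class of ∼ is a closed directed atlas. Moreover, any two equivalence classes C and C' satisfy (C⁻¹·C)↑ = (C'⁻¹·C')↑ and (C·C⁻¹)↑ = (C'·C'⁻¹)↑. -/
import Mathlib


namespace InvSgpPaper

/-- `inv` makes the semigroup `S` an inverse semigroup: `a * inv a * a = a`,
`inv a * a * inv a = inv a`, and all idempotents commute. -/
structure IsInvSgp (S : Type*) [Semigroup S] (inv : S → S) : Prop where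
  mul_inv_mul : ∀ a : S, a * inv a * a = a
  inv_mul_inv : ∀ a : S, inv a * a * inv a = inv a
  idem_comm : ∀ e f : S, e * e = e → f * f = f → e * f = f * e

section Defs

variable {S X Y : Type*} [Semigroup S]

/-- The natural partial order on an inverse semigroup:
`a ≤ b` iff `a = e * b` for some idempotent `e`. -/
def nle (a b : S) : Prop := ∃ e : S, e * e = e ∧ a = e * b

/-- The upward closure `A↑` of a subset `A`. -/
def up (A : Set S) : Set S := {s : S | ∃ a ∈ A, nle a s}

/-- A closed inverse subsemigroup: closed under multiplication, under `inv`,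
and upward closed (`H = H↑`). -/
def IsClosedInvSub (inv : S → S) (H : Set S) : Prop :=
  (∀ a ∈ H, ∀ b ∈ H, a * b ∈ H) ∧ (∀ a ∈ H, inv a ∈ H) ∧ up H = H

/-- The left coset `(sH)↑ = {x | s * h ≤ x for some h ∈ H}`. -/
def lcoset (s : S) (H : Set S) : Set S := {x : S | ∃ h ∈ H, nle (s * h) x}

/-- The set of idempotents of a subset `A`. -/
def idemSet (A : Set S) : Set S := {e ∈ A | e * e = e}

/-- A filter in `E(S)`: a nonempty set of idempotents closed under
multiplication and upward closed within `E(S)`. -/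
def IsFilterE (F : Set S) : Prop :=
  F.Nonempty ∧ (∀ e ∈ F, e * e = e) ∧ (∀ e ∈ F, ∀ f ∈ F, e * f ∈ F) ∧
    (∀ e ∈ F, ∀ f : S, f * f = f → nle e f → f ∈ F)

/-- `F̄ = {s ∈ S : ∀ f ∈ F, inv s * f * s ∈ F ∧ s * f * inv s ∈ F}`. -/
def fbar (inv : S → S) (F : Set S) : Set S :=
  {s : S | ∀ f ∈ F, inv s * f * s ∈ F ∧ s * f * inv s ∈ F}

/-- The minimum group congruence `σ`: `a σ b` iff some `c` satisfies `c ≤ a` and `c ≤ b`. -/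
def sigmaRel (a b : S) : Prop := ∃ c : S, nle c a ∧ nle c b

/-- The elementwise product of two subsets. -/
def setMul (A B : Set S) : Set S := {x : S | ∃ a ∈ A, ∃ b ∈ B, x = a * b}

/-- The elementwise inverse `A⁻¹` of a subset. -/
def setInv (inv : S → S) (A : Set S) : Set S := inv '' A

/-- An atlas: a subset `A` with `A·A⁻¹·A = A`. -/
def IsAtlas (inv : S → S) (A : Set S) : Prop := setMul (setMul A (setInv inv A)) A = A

/-- A (down-)directed subset: nonempty, and any two elements have a common
lower bound inside it. -/
def IsDirectedSet (A : Set S) : Prop :=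
  A.Nonempty ∧ ∀ a ∈ A, ∀ b ∈ A, ∃ c ∈ A, nle c a ∧ nle c b

/-- An action of `S` on `X` by partial maps, axioms (A1) and (A2). -/
def IsAction (act : S → X → Option X) : Prop :=
  (∀ e : S, e * e = e → ∀ x y : X, act e x = some y → y = x) ∧
    (∀ (s t : S) (x : X), act (s * t) x = (act t x).bind (act s))

/-- Transitivity of an action. -/
def IsTransitiveAct (act : S → X → Option X) : Prop :=
  ∀ x y : X, ∃ s : S, act s x = some y

/-- Effectiveness of an action: every point is in the domain of some element. -/
def IsEffectiveAct (act : S → X → Option X) : Prop :=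
  ∀ x : X, ∃ (s : S) (x' : X), act s x = some x'

/-- The stabilizer of a point. -/
def stab (act : S → X → Option X) (x : X) : Set S := {s : S | act s x = some x}

/-- A morphism of `S`-actions. -/
def IsMorphism (actX : S → X → Option X) (actY : S → Y → Option Y) (α : X → Y) : Prop :=
  ∀ (s : S) (x x' : X), actX s x = some x' → actY s (α x) = some (α x')

/-- A strong morphism of `S`-actions. -/
def IsStrongMorphism (actX : S → X → Option X) (actY : S → Y → Option Y)
    (α : X → Y) : Prop :=
  IsMorphism actX actY α ∧
    ∀ (s : S) (x : X) (y' : Y), actY s (α x) = some y' → ∃ x' : X, actX s x = some x'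

end Defs

section Aux
variable {S : Type*} [Semigroup S] {inv : S → S}

lemma idem_il (hS : IsInvSgp S inv) (a : S) : (inv a * a) * (inv a * a) = inv a * a := by
  calc (inv a * a) * (inv a * a) = inv a * (a * inv a * a) := by simp only [mul_assoc]
    _ = inv a * a := by rw [hS.mul_inv_mul]

lemma idem_ir (hS : IsInvSgp S inv) (a : S) : (a * inv a) * (a * inv a) = a * inv a := by
  calc (a * inv a) * (a * inv a) = (a * (inv a * a)) * inv a := by simp only [mul_assoc]
    _ = a * inv a := by rw [← mul_assoc, hS.mul_inv_mul]

lemma idem_mul (hS : IsInvSgp S inv) {e f : S} (he : e * e = e) (hf : f * f = f) :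
    (e * f) * (e * f) = e * f := by
  calc (e * f) * (e * f) = e * ((f * e) * f) := by simp only [mul_assoc]
    _ = e * ((e * f) * f) := by rw [hS.idem_comm f e hf he]
    _ = (e * e) * (f * f) := by simp only [mul_assoc]
    _ = e * f := by rw [he, hf]

lemma inv_unique (hS : IsInvSgp S inv) {a x y : S} (h1 : a * x * a = a) (h2 : x * a * x = x)
    (h3 : a * y * a = a) (h4 : y * a * y = y) : x = y := by
  have e_ax : (a * x) * (a * x) = a * x := by
    calc (a * x) * (a * x) = a * (x * a * x) := by simp only [mul_assoc]
      _ = a * x := by rw [h2]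
  have e_ay : (a * y) * (a * y) = a * y := by
    calc (a * y) * (a * y) = a * (y * a * y) := by simp only [mul_assoc]
      _ = a * y := by rw [h4]
  have e_xa : (x * a) * (x * a) = (x * a) := by
    calc (x * a) * (x * a) = (x * a * x) * a := by simp only [mul_assoc]
      _ = x * a := by rw [h2]
  have e_ya : (y * a) * (y * a) = (y * a) := by
    calc (y * a) * (y * a) = (y * a * y) * a := by simp only [mul_assoc]
      _ = y * a := by rw [h4]
  have key1 : x = x * (a * y) := by
    calc x = x * a * x := h2.symm
      _ = x * (a * y * a) * x := by rw [h3]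
      _ = x * ((a * y) * (a * x)) := by simp only [mul_assoc]
      _ = x * ((a * x) * (a * y)) := by rw [hS.idem_comm _ _ e_ay e_ax]
      _ = (x * a * x) * (a * y) := by simp only [mul_assoc]
      _ = x * (a * y) := by rw [h2]
  have key2 : y = x * (a * y) := by
    calc y = y * a * y := h4.symm
      _ = y * (a * x * a) * y := by rw [h1]
      _ = ((y * a) * (x * a)) * y := by simp only [mul_assoc]
      _ = ((x * a) * (y * a)) * y := by rw [hS.idem_comm _ _ e_ya e_xa]
      _ = x * (a * (y * a * y)) := by simp only [mul_assoc]
      _ = x * (a * y) := by rw [h4]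
  exact key1.trans key2.symm

lemma inv_inv (hS : IsInvSgp S inv) (a : S) : inv (inv a) = a :=
  inv_unique hS (hS.mul_inv_mul (inv a)) (hS.inv_mul_inv (inv a)) (hS.inv_mul_inv a)
    (hS.mul_inv_mul a)

lemma inv_idem (hS : IsInvSgp S inv) {e : S} (he : e * e = e) : inv e = e :=
  inv_unique hS (hS.mul_inv_mul e) (hS.inv_mul_inv e) (by rw [he, he]) (by rw [he, he])

lemma inv_mul (hS : IsInvSgp S inv) (a b : S) : inv (a * b) = inv b * inv a := by
  refine inv_unique hS (hS.mul_inv_mul (a * b)) (hS.inv_mul_inv (a * b)) ?_ ?_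
  · have hc : (b * inv b) * (inv a * a) = (inv a * a) * (b * inv b) :=
      hS.idem_comm _ _ (idem_ir hS b) (idem_il hS a)
    calc (a * b) * (inv b * inv a) * (a * b)
        = a * ((b * inv b) * (inv a * a)) * b := by simp only [mul_assoc]
      _ = a * ((inv a * a) * (b * inv b)) * b := by rw [hc]
      _ = (a * inv a * a) * ((b * inv b) * b) := by simp only [mul_assoc]
      _ = a * b := by rw [hS.mul_inv_mul a, hS.mul_inv_mul b]
  · have hc : (inv a * a) * (b * inv b) = (b * inv b) * (inv a * a) :=
      hS.idem_comm _ _ (idem_il hS a) (idem_ir hS b)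
    calc (inv b * inv a) * (a * b) * (inv b * inv a)
        = inv b * ((inv a * a) * (b * inv b)) * inv a := by simp only [mul_assoc]
      _ = inv b * ((b * inv b) * (inv a * a)) * inv a := by rw [hc]
      _ = (inv b * b * inv b) * ((inv a * a) * inv a) := by simp only [mul_assoc]
      _ = inv b * inv a := by rw [hS.inv_mul_inv b, hS.inv_mul_inv a]

lemma nle_refl (hS : IsInvSgp S inv) (a : S) : nle a a :=
  ⟨a * inv a, idem_ir hS a, (hS.mul_inv_mul a).symm⟩

lemma nle_trans (hS : IsInvSgp S inv) {a b c : S} (h1 : nle a b) (h2 : nle b c) : nle a c := by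
  obtain ⟨e, he, hab⟩ := h1
  obtain ⟨f, hf, hbc⟩ := h2
  exact ⟨e * f, idem_mul hS he hf, by rw [hab, hbc]; simp only [mul_assoc]⟩

/-- If `c ≤ b` then `c * c⁻¹ * b = c`. -/
lemma self_mul_of_nle (hS : IsInvSgp S inv) {c b : S} (h : nle c b) : c * inv c * b = c := by
  obtain ⟨e, he, hcb⟩ := h
  have hinv : inv c = inv b * e := by rw [hcb, inv_mul hS, inv_idem hS he]
  have hc : e * (b * inv b) = (b * inv b) * e := hS.idem_comm _ _ he (idem_ir hS b)
  calc c * inv c * b = e * ((b * inv b) * e) * b := by rw [hinv, hcb]; simp only [mul_assoc]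
    _ = e * (e * (b * inv b)) * b := by rw [← hc]
    _ = (e * e) * ((b * (inv b * b))) := by simp only [mul_assoc]
    _ = e * b := by rw [he, ← mul_assoc b (inv b) b, hS.mul_inv_mul b]
    _ = c := hcb.symm

lemma conj_idem (hS : IsInvSgp S inv) {f : S} (b : S) (hf : f * f = f) :
    (b * f * inv b) * (b * f * inv b) = b * f * inv b := by
  have hc : f * (inv b * b) = (inv b * b) * f := hS.idem_comm _ _ hf (idem_il hS b)
  calc (b * f * inv b) * (b * f * inv b)
      = b * (f * (inv b * b)) * (f * inv b) := by simp only [mul_assoc]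
    _ = b * ((inv b * b) * f) * (f * inv b) := by rw [hc]
    _ = (b * (inv b * b)) * ((f * f) * inv b) := by simp only [mul_assoc]
    _ = b * f * inv b := by rw [← mul_assoc b (inv b) b, hS.mul_inv_mul, hf, ← mul_assoc]

lemma right_nle (hS : IsInvSgp S inv) {f : S} (b : S) (hf : f * f = f) : nle (b * f) b := by
  refine ⟨b * f * inv b, conj_idem hS b hf, ?_⟩
  have hc : f * (inv b * b) = (inv b * b) * f := hS.idem_comm _ _ hf (idem_il hS b)
  calc b * f = (b * (inv b * b)) * f := by rw [← mul_assoc b (inv b) b, hS.mul_inv_mul]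
    _ = b * ((inv b * b) * f) := by simp only [mul_assoc]
    _ = b * (f * (inv b * b)) := by rw [hc]
    _ = (b * f * inv b) * b := by simp only [mul_assoc]

lemma nle_mul_left (hS : IsInvSgp S inv) {a b : S} (c : S) (h : nle a b) : nle (a * c) (b * c) := by
  obtain ⟨e, he, hab⟩ := h
  exact ⟨e, he, by rw [hab]; simp only [mul_assoc]⟩

lemma nle_mul_right (hS : IsInvSgp S inv) {c d : S} (b : S) (h : nle c d) : nle (b * c) (b * d) := by
  obtain ⟨f, hf, hcd⟩ := h
  refine ⟨b * f * inv b, conj_idem hS b hf, ?_⟩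
  have hc : f * (inv b * b) = (inv b * b) * f := hS.idem_comm _ _ hf (idem_il hS b)
  calc b * c = b * (f * d) := by rw [hcd]
    _ = (b * (inv b * b)) * (f * d) := by rw [← mul_assoc b (inv b) b, hS.mul_inv_mul]
    _ = b * ((inv b * b) * f) * d := by simp only [mul_assoc]
    _ = b * (f * (inv b * b)) * d := by rw [hc]
    _ = (b * f * inv b) * (b * d) := by simp only [mul_assoc]

lemma nle_mul (hS : IsInvSgp S inv) {a b c d : S} (h1 : nle a b) (h2 : nle c d) :
    nle (a * c) (b * d) :=
  nle_trans hS (nle_mul_left hS c h1) (nle_mul_right hS b h2)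

lemma nle_inv (hS : IsInvSgp S inv) {a b : S} (h : nle a b) : nle (inv a) (inv b) := by
  obtain ⟨e, he, hab⟩ := h
  have h' : inv a = inv b * e := by rw [hab, inv_mul hS, inv_idem hS he]
  have hidem : (inv b * e * b) * (inv b * e * b) = inv b * e * b := by
    have := conj_idem hS (inv b) he
    rwa [inv_inv hS] at this
  refine ⟨inv b * e * b, hidem, ?_⟩
  have hc : e * (b * inv b) = (b * inv b) * e := hS.idem_comm _ _ he (idem_ir hS b)
  calc inv a = inv b * e := h'
    _ = (inv b * (b * inv b)) * e := by rw [← mul_assoc (inv b) b (inv b), hS.inv_mul_inv]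
    _ = inv b * ((b * inv b) * e) := by simp only [mul_assoc]
    _ = inv b * (e * (b * inv b)) := by rw [hc]
    _ = (inv b * e * b) * inv b := by simp only [mul_assoc]

/-- meet of two elements below b -/
lemma meet_lemma (hS : IsInvSgp S inv) {c d b : S} (hc : nle c b) (hd : nle d b) :
    nle (c * inv c * d) c ∧ nle (c * inv c * d) d := by
  constructor
  · obtain ⟨f, hf, hdb⟩ := hd
    have hcomm : (c * inv c) * f = f * (c * inv c) := hS.idem_comm _ _ (idem_ir hS c) hf
    refine ⟨f, hf, ?_⟩
    calc c * inv c * d = ((c * inv c) * f) * b := by rw [hdb]; simp only [mul_assoc]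
      _ = (f * (c * inv c)) * b := by rw [hcomm]
      _ = f * (c * inv c * b) := by simp only [mul_assoc]
      _ = f * c := by rw [self_mul_of_nle hS hc]
  · exact ⟨c * inv c, idem_ir hS c, rfl⟩

lemma dom_eq (hS : IsInvSgp S inv) {f : S} (b : S) (hf : f * f = f) :
    inv (b * f) * (b * f) = (inv b * b) * f := by
  have hinv : inv (b * f) = f * inv b := by rw [inv_mul hS, inv_idem hS hf]
  have hc : f * (inv b * b) = (inv b * b) * f := hS.idem_comm _ _ hf (idem_il hS b)
  calc inv (b * f) * (b * f) = (f * inv b) * (b * f) := by rw [hinv]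
    _ = f * ((inv b * b) * f) := by simp only [mul_assoc]
    _ = f * (f * (inv b * b)) := by rw [← hc]
    _ = (f * f) * (inv b * b) := by simp only [mul_assoc]
    _ = (inv b * b) * f := by rw [hf, hc]

lemma ran_eq (hS : IsInvSgp S inv) {e : S} (b : S) (he : e * e = e) :
    (e * b) * inv (e * b) = (b * inv b) * e := by
  have hinv : inv (e * b) = inv b * e := by rw [inv_mul hS, inv_idem hS he]
  have hc : e * (b * inv b) = (b * inv b) * e := hS.idem_comm _ _ he (idem_ir hS b)
  calc (e * b) * inv (e * b) = (e * b) * (inv b * e) := by rw [hinv]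
    _ = e * ((b * inv b) * e) := by simp only [mul_assoc]
    _ = e * (e * (b * inv b)) := by rw [← hc]
    _ = (e * e) * (b * inv b) := by simp only [mul_assoc]
    _ = (b * inv b) * e := by rw [he, hc]

end Aux

/-- On a nonempty closed atlas `A`, the relation
`a ∼ b iff ∃ c ∈ A, c ≤ a ∧ c ≤ b` is an equivalence relation, its classes are
closed directed atlases, and any two classes `C, C'` satisfy
`(C⁻¹·C)↑ = (C'⁻¹·C')↑` and `(C·C⁻¹)↑ = (C'·C'⁻¹)↑`. -/

theorem stmt16 {S : Type*} [Semigroup S] (inv : S → S) (hS : IsInvSgp S inv)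
    (A : Set S) (hne : A.Nonempty) (hcl : up A = A) (hatlas : IsAtlas inv A)
    (sim : S → S → Prop) (hsim : ∀ a b : S, sim a b ↔ ∃ c ∈ A, nle c a ∧ nle c b)
    (cls : S → Set S) (hcls : ∀ a : S, cls a = {b ∈ A | sim a b}) :
    (∀ a ∈ A, sim a a) ∧
    (∀ a ∈ A, ∀ b ∈ A, sim a b → sim b a) ∧
    (∀ a ∈ A, ∀ b ∈ A, ∀ c ∈ A, sim a b → sim b c → sim a c) ∧
    (∀ a ∈ A, up (cls a) = cls a ∧ IsDirectedSet (cls a) ∧ IsAtlas inv (cls a)) ∧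
    (∀ a ∈ A, ∀ b ∈ A,
      up (setMul (setInv inv (cls a)) (cls a)) = up (setMul (setInv inv (cls b)) (cls b)) ∧
      up (setMul (cls a) (setInv inv (cls a))) = up (setMul (cls b) (setInv inv (cls b)))) := by
  -- basic membership helpers
  have memA : ∀ x ∈ A, ∀ y ∈ A, ∀ z ∈ A, (x * inv y) * z ∈ A := by
    intro x hx y hy z hz
    have : (x * inv y) * z ∈ setMul (setMul A (setInv inv A)) A :=
      ⟨x * inv y, ⟨x, hx, inv y, ⟨y, hy, rfl⟩, rfl⟩, z, hz, rfl⟩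
    rwa [hatlas] at this
  have upA : ∀ x ∈ A, ∀ s : S, nle x s → s ∈ A := by
    intro x hx s h
    rw [← hcl]; exact ⟨x, hx, h⟩
  have hmem : ∀ u v : S, v ∈ cls u ↔ v ∈ A ∧ sim u v := by
    intro u v; rw [hcls u]; exact Iff.rfl
  -- reflexivity
  have hrefl : ∀ a ∈ A, sim a a := fun a ha =>
    (hsim a a).2 ⟨a, ha, nle_refl hS a, nle_refl hS a⟩
  -- transitivity (no membership needed)
  have htrans : ∀ a b c : S, sim a b → sim b c → sim a c := by
    intro a b c h1 h2
    obtain ⟨c1, hc1A, h1a, h1b⟩ := (hsim a b).1 h1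
    obtain ⟨c2, hc2A, h2b, h2c⟩ := (hsim b c).1 h2
    have hmA : (c1 * inv c1) * c2 ∈ A := memA c1 hc1A c1 hc1A c2 hc2A
    obtain ⟨hm1, hm2⟩ := meet_lemma hS h1b h2b
    exact (hsim a c).2 ⟨c1 * inv c1 * c2, hmA, nle_trans hS hm1 h1a, nle_trans hS hm2 h2c⟩
  -- directedness of classes
  have hdir : ∀ a ∈ A, ∀ x ∈ cls a, ∀ y ∈ cls a, ∃ c ∈ cls a, nle c x ∧ nle c y := by
    intro a ha x hx y hy
    obtain ⟨hxA, hax⟩ := (hmem a x).1 hx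
    obtain ⟨hyA, hay⟩ := (hmem a y).1 hy
    obtain ⟨c1, hc1A, h1a, h1x⟩ := (hsim a x).1 hax
    obtain ⟨c2, hc2A, h2a, h2y⟩ := (hsim a y).1 hay
    have hmA : (c1 * inv c1) * c2 ∈ A := memA c1 hc1A c1 hc1A c2 hc2A
    obtain ⟨hm1, hm2⟩ := meet_lemma hS h1a h2a
    refine ⟨c1 * inv c1 * c2, ?_, nle_trans hS hm1 h1x, nle_trans hS hm2 h2y⟩
    exact (hmem a _).2 ⟨hmA, (hsim a _).2
      ⟨c1 * inv c1 * c2, hmA, nle_trans hS hm1 h1a, nle_refl hS _⟩⟩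
  -- closedness of classes
  have hclosed : ∀ a ∈ A, up (cls a) = cls a := by
    intro a ha
    apply Set.Subset.antisymm
    · rintro s ⟨b, hb, hbs⟩
      obtain ⟨hbA, hab⟩ := (hmem a b).1 hb
      obtain ⟨c, hcA, hca, hcb⟩ := (hsim a b).1 hab
      exact (hmem a s).2 ⟨upA b hbA s hbs, (hsim a s).2 ⟨c, hcA, hca, nle_trans hS hcb hbs⟩⟩
    · intro s hs; exact ⟨s, hs, nle_refl hS s⟩
  -- membership of classes in A
  have hclsA : ∀ u : S, cls u ⊆ A := by
    intro u v hv; exact ((hmem u v).1 hv).1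
  refine ⟨hrefl, ?_, ?_, ?_, ?_⟩
  · -- symmetry
    intro a _ b _ h
    obtain ⟨c, hcA, h1, h2⟩ := (hsim a b).1 h
    exact (hsim b a).2 ⟨c, hcA, h2, h1⟩
  · intro a _ b _ c _ h1 h2; exact htrans a b c h1 h2
  · -- classes are closed directed atlases
    intro a ha
    refine ⟨hclosed a ha, ⟨⟨a, (hmem a a).2 ⟨ha, hrefl a ha⟩⟩, hdir a ha⟩, ?_⟩
    apply Set.Subset.antisymm
    · rintro t ⟨p, ⟨x, hx, w, ⟨y, hy, rfl⟩, rfl⟩, z, hz, rfl⟩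
      obtain ⟨c1, hc1, h1x, h1y⟩ := hdir a ha x hx y hy
      obtain ⟨c2, hc2, h2c1, h2z⟩ := hdir a ha c1 hc1 z hz
      have hd : nle ((c2 * inv c2) * c2) ((x * inv y) * z) :=
        nle_mul hS (nle_mul hS (nle_trans hS h2c1 h1x)
          (nle_inv hS (nle_trans hS h2c1 h1y))) h2z
      rw [hS.mul_inv_mul c2] at hd
      rw [← hclosed a ha]
      exact ⟨c2, hc2, hd⟩
    · intro t ht
      exact ⟨t * inv t, ⟨t, ht, inv t, ⟨t, ht, rfl⟩, rfl⟩, t, ht, (hS.mul_inv_mul t).symm⟩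
  · -- same domain/range idempotents
    have domsub : ∀ a ∈ A, ∀ b ∈ A,
        up (setMul (setInv inv (cls a)) (cls a)) ⊆ up (setMul (setInv inv (cls b)) (cls b)) := by
      intro a ha b hb s hs
      obtain ⟨t, ⟨p, ⟨x, hx, rfl⟩, y, hy, rfl⟩, hts⟩ := hs
      obtain ⟨c, hc, hcx, hcy⟩ := hdir a ha x hx y hy
      have hcA : c ∈ A := hclsA a hc
      have hwA : b * (inv c * c) ∈ A := by
        have := memA b hb c hcA c hcA
        rwa [mul_assoc] at this
      have hwb : nle (b * (inv c * c)) b := right_nle hS b (idem_il hS c)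
      have hwcls : b * (inv c * c) ∈ cls b :=
        (hmem b _).2 ⟨hwA, (hsim b _).2 ⟨b * (inv c * c), hwA, hwb, nle_refl hS _⟩⟩
      have h1 : nle (inv (b * (inv c * c)) * (b * (inv c * c))) (inv c * c) :=
        ⟨inv b * b, idem_il hS b, dom_eq hS b (idem_il hS c)⟩
      have h2 : nle (inv c * c) (inv x * y) := nle_mul hS (nle_inv hS hcx) hcy
      exact ⟨inv (b * (inv c * c)) * (b * (inv c * c)),
        ⟨inv (b * (inv c * c)), ⟨b * (inv c * c), hwcls, rfl⟩, b * (inv c * c), hwcls, rfl⟩,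
        nle_trans hS (nle_trans hS h1 h2) hts⟩
    have ransub : ∀ a ∈ A, ∀ b ∈ A,
        up (setMul (cls a) (setInv inv (cls a))) ⊆ up (setMul (cls b) (setInv inv (cls b))) := by
      intro a ha b hb s hs
      obtain ⟨t, ⟨x, hx, p, ⟨y, hy, rfl⟩, rfl⟩, hts⟩ := hs
      obtain ⟨c, hc, hcx, hcy⟩ := hdir a ha x hx y hy
      have hcA : c ∈ A := hclsA a hc
      have hwA : (c * inv c) * b ∈ A := memA c hcA c hcA b hb
      have hwb : nle ((c * inv c) * b) b := ⟨c * inv c, idem_ir hS c, rfl⟩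
      have hwcls : (c * inv c) * b ∈ cls b :=
        (hmem b _).2 ⟨hwA, (hsim b _).2 ⟨(c * inv c) * b, hwA, hwb, nle_refl hS _⟩⟩
      have h1 : nle (((c * inv c) * b) * inv ((c * inv c) * b)) (c * inv c) :=
        ⟨b * inv b, idem_ir hS b, ran_eq hS b (idem_ir hS c)⟩
      have h2 : nle (c * inv c) (x * inv y) := nle_mul hS hcx (nle_inv hS hcy)
      exact ⟨((c * inv c) * b) * inv ((c * inv c) * b),
        ⟨(c * inv c) * b, hwcls, inv ((c * inv c) * b), ⟨(c * inv c) * b, hwcls, rfl⟩, rfl⟩,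
        nle_trans hS (nle_trans hS h1 h2) hts⟩
    intro a ha b hb
    exact ⟨Set.Subset.antisymm (domsub a ha b hb) (domsub b hb a ha),
      Set.Subset.antisymm (ransub a ha b hb) (ransub b hb a ha)⟩


end InvSgpPaper
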